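/- arXiv:1404.3629 — 2 statements merged into one kernel-verified Lean document; each statement's English description precedes it below -/
import Mathlib

section
/- Let C be any initial scatterer configuration on the honeycomb lattice and I an initial state. Then the particle trajectory of the flipping rotator system (H_fr, I, C), evolved by r(t+1) = r(t) + v(t), v(t+1) = R[C_h(t)] v(t) when r(t+1) = h, with the scatterer at the visited site flipping sign, is equal for all times t ≥ 0 to the particle trajectory of the flipping mirror system (H_fm, I, φ(C)), whose velocity update is v(t+1) = R[C_h(t)] v(t) if the visited site h ∈ ℍ⁺ and v(t+1) = R[−C_h(t)] v(t) if h ∈ ℍ⁻, with the same flipping rule. Symmetrically, (H_fm, I, C) and (H_fr, I, φ(C)) have the same trajectory. -/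
open Real

attribute [local instance] Classical.propDecidable

noncomputable section

/-- Points of the plane. -/
abbrev Pt : Type := ℝ × ℝ

/-- Sites of the regular honeycomb lattice with unit bonds, containing the origin,
with a horizontal bond from `(0,0)` to `(1,0)`. -/
def HSet : Set Pt :=
  {p | ∃ m n : ℤ,
    p = ((3/2) * (m : ℝ) + (3/2) * (n : ℝ),
         (Real.sqrt 3 / 2) * (m : ℝ) - (Real.sqrt 3 / 2) * (n : ℝ)) ∨
    p = ((3/2) * (m : ℝ) + (3/2) * (n : ℝ) + 1,
         (Real.sqrt 3 / 2) * (m : ℝ) - (Real.sqrt 3 / 2) * (n : ℝ))}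

/-- Sites at the right end of their horizontal bond. -/
def Hplus : Set Pt := {h | h ∈ HSet ∧ h - ((1 : ℝ), (0 : ℝ)) ∈ HSet}

/-- Sites at the left end of their horizontal bond. -/
def Hminus : Set Pt := {h | h ∈ HSet ∧ h + ((1 : ℝ), (0 : ℝ)) ∈ HSet}

/-- The rotation operator `R(z)`, rotating a velocity by the angle `πz/3` according to the
matrix `[[cos(πz/3), sin(πz/3)], [−sin(πz/3), cos(πz/3)]]`. -/
def Rot (z : ℤ) (v : Pt) : Pt :=
  (Real.cos ((z : ℝ) * Real.pi / 3) * v.1 + Real.sin ((z : ℝ) * Real.pi / 3) * v.2,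
   -Real.sin ((z : ℝ) * Real.pi / 3) * v.1 + Real.cos ((z : ℝ) * Real.pi / 3) * v.2)

/-- A configuration of scatterer orientations. -/
abbrev Config : Type := Pt → ℤ

/-- A configuration is valid if every orientation is `±1`. -/
def ValidConfig (C : Config) : Prop := ∀ h, C h = 1 ∨ C h = -1

/-- The full state of a Lorentz lattice gas: particle position, particle velocity,
and the current configuration of scatterers. -/
structure LLGState where
  pos : Pt
  vel : Pt
  cfg : Config

/-- One time step of the flipping rotator dynamics: the particle moves to `r' = r + v`,
its velocity is rotated by the scatterer at `r'`, and that scatterer flips. -/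
def frStep (s : LLGState) : LLGState :=
  let r' := s.pos + s.vel
  { pos := r'
    vel := Rot (s.cfg r') s.vel
    cfg := fun h => if h = r' then -s.cfg h else s.cfg h }

/-- One time step of the flipping mirror dynamics: as for rotators but the scattering
uses orientation `C_h` at sites of `ℍ⁺` and `−C_h` at other (i.e. `ℍ⁻`) sites. -/
def fmStep (s : LLGState) : LLGState :=
  let r' := s.pos + s.vel
  { pos := r'
    vel := Rot (if r' ∈ Hplus then s.cfg r' else -s.cfg r') s.vel
    cfg := fun h => if h = r' then -s.cfg h else s.cfg h }

/-- The state of the flipping rotator system `(H_fr, (r,v), C)` at time `t`. -/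
def frTraj (r v : Pt) (C : Config) (t : ℕ) : LLGState := frStep^[t] ⟨r, v, C⟩

/-- The state of the flipping mirror system `(H_fm, (r,v), C)` at time `t`. -/
def fmTraj (r v : Pt) (C : Config) (t : ℕ) : LLGState := fmStep^[t] ⟨r, v, C⟩

/-- The particle's position at time `t` in the flipping rotator system. -/
def frPos (r v : Pt) (C : Config) (t : ℕ) : Pt := (frTraj r v C t).pos

/-- A valid initial state: the particle sits at a lattice site and moves with unit speed
along a lattice bond. -/
def IsInitial (r v : Pt) : Prop :=
  r ∈ HSet ∧ r + v ∈ HSet ∧ v.1 ^ 2 + v.2 ^ 2 = 1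

/-- The map `φ` flipping the orientation of every scatterer at a site of `ℍ⁻`
(and fixing those of `ℍ⁺`). -/
def phi (C : Config) : Config := fun h => if h ∈ Hplus then C h else -C h

/-- Centers of the hexagons of the honeycomb lattice. -/
def hexCenter (m n : ℤ) : Pt :=
  (1/2 + (3/2) * (m : ℝ) + (3/2) * (n : ℝ),
   Real.sqrt 3 / 2 + (Real.sqrt 3 / 2) * (m : ℝ) - (Real.sqrt 3 / 2) * (n : ℝ))

/-- The `k`-th vertex of the unit hexagon with center `c`. -/
def vtx (c : Pt) (k : Fin 6) : Pt :=
  (c.1 + Real.cos ((k.1 : ℝ) * Real.pi / 3), c.2 + Real.sin ((k.1 : ℝ) * Real.pi / 3))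

/-- The six sites of the unit hexagon with center `c`. -/
def hexSites (c : Pt) : Set Pt := {p | ∃ k : Fin 6, p = vtx c k}

/-- `S` is (the site set of) a hexagon of the honeycomb lattice. -/
def IsHexagon (S : Set Pt) : Prop := ∃ m n : ℤ, S = hexSites (hexCenter m n)

/-- A particle with positions `p` enters `Ω` at time `t1` and exits at `t2`. -/
def CrossesDuring (p : ℕ → Pt) (Ω : Set Pt) (t1 t2 : ℕ) : Prop :=
  0 < t1 ∧ t1 ≤ t2 ∧ (∀ t, t1 ≤ t → t ≤ t2 → p t ∈ Ω) ∧
    p (t1 - 1) ∉ Ω ∧ p (t2 + 1) ∉ Ω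

/-- The particle induces a transition from the hexagon configuration `α` to `β` on `S`:
for some flipping rotator system, the hexagon `S` carries configuration `α` just before
the particle enters it and configuration `β` just after it exits. -/
def HexTransition (S : Set Pt) (α β : Config) : Prop :=
  ∃ (r v : Pt) (C : Config) (t1 t2 : ℕ), IsInitial r v ∧ ValidConfig C ∧
    CrossesDuring (frPos r v C) S t1 t2 ∧
    Set.EqOn ((frTraj r v C (t1 - 1)).cfg) α S ∧
    Set.EqOn ((frTraj r v C (t2 + 1)).cfg) β S

/-- The relation `∼`: transformability by a sequence of particle-induced transitions. -/
def HexEquiv (S : Set Pt) : Config → Config → Prop :=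
  Relation.EqvGen (HexTransition S)

/-- A configuration is admissible if, on every hexagon of the lattice, it is equivalent
(under particle-induced transitions) to the all-right-rotator configuration. -/
def Admissible (C : Config) : Prop :=
  ∀ S, IsHexagon S → HexEquiv S C (fun _ => 1)

/-- A blocking configuration: there is a finite time `τ_b` such that from every initial
condition the particle returns to its initial position within `τ_b` steps. -/
def Blocking (C : Config) : Prop :=
  ∃ τb : ℕ, ∀ r v, IsInitial r v → ∃ t, 0 < t ∧ t ≤ τb ∧ frPos r v C t = r

/-- The configuration of all right rotators. -/
def allRight : Config := fun _ => 1

/-- `ℓ` is a local crossing of `Ω` with configuration `C`: the list of positions of a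
particle which enters `Ω` (with `C` the configuration at entry) and later exits it. -/
def IsLocalCrossing (Ω : Set Pt) (C : Config) (ℓ : List Pt) : Prop :=
  ∃ (r v : Pt) (n : ℕ), IsInitial r v ∧ r ∉ Ω ∧ 1 ≤ n ∧
    (∀ t, 1 ≤ t → t ≤ n → frPos r v C t ∈ Ω) ∧
    frPos r v C (n + 1) ∉ Ω ∧
    ℓ = (List.range n).map (fun t => frPos r v C (t + 1))

/-- `ℓ` is a local cycle of `Ω` with configuration `C`: a self-avoiding closed trajectory
inside `Ω` whose final velocity equals its initial velocity. -/
def IsLocalCycle (Ω : Set Pt) (C : Config) (ℓ : List Pt) : Prop :=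
  ∃ (r v : Pt) (n : ℕ), IsInitial r v ∧ 1 ≤ n ∧
    (∀ t, t ≤ n → frPos r v C t ∈ Ω) ∧
    frPos r v C n = r ∧ (frTraj r v C n).vel = v ∧
    (∀ s t, s < t → t < n → frPos r v C s ≠ frPos r v C t) ∧
    ℓ = (List.range n).map (fun t => frPos r v C t)

/-- A local trajectory of `Ω`: a local crossing or a local cycle. -/
def IsLocalTraj (Ω : Set Pt) (C : Config) (ℓ : List Pt) : Prop :=
  IsLocalCrossing Ω C ℓ ∨ IsLocalCycle Ω C ℓ

/-- The lattice configuration realizing the hexagon configuration `f` on the hexagon with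
center `c` (all right rotators elsewhere). -/
def cfgOf (c : Pt) (f : Fin 6 → Bool) : Config :=
  fun p => if h : ∃ k : Fin 6, p = vtx c k then (if f h.choose then 1 else -1) else 1

/-- Two hexagon configurations are related by a rotation or reflection of the hexagon. -/
def DihRel (f g : Fin 6 → Bool) : Prop :=
  ∃ j : Fin 6, (∀ k, g k = f (k + j)) ∨ (∀ k, g k = f (j - k))

end

lemma phi_flip (D : Config) (r' : Pt) :
    (fun h => if h = r' then -(phi D h) else phi D h)
      = phi (fun h => if h = r' then -D h else D h) := by
  funext h
  simp only [phi]
  split_ifs <;> ring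

lemma fm_phi_step (s : LLGState) :
    fmStep ⟨s.pos, s.vel, phi s.cfg⟩
      = ⟨(frStep s).pos, (frStep s).vel, phi (frStep s).cfg⟩ := by
  have h1 : (if s.pos + s.vel ∈ Hplus then phi s.cfg (s.pos + s.vel)
      else -(phi s.cfg (s.pos + s.vel))) = s.cfg (s.pos + s.vel) := by
    simp only [phi]; split_ifs <;> ring
  simp only [fmStep, frStep, h1, phi_flip]

lemma fr_phi_step (s : LLGState) :
    frStep ⟨s.pos, s.vel, phi s.cfg⟩
      = ⟨(fmStep s).pos, (fmStep s).vel, phi (fmStep s).cfg⟩ := by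
  have h1 : phi s.cfg (s.pos + s.vel)
      = (if s.pos + s.vel ∈ Hplus then s.cfg (s.pos + s.vel)
         else -(s.cfg (s.pos + s.vel))) := by
    simp only [phi]
  simp only [fmStep, frStep, h1, phi_flip]

lemma fm_phi_traj (r v : Pt) (C : Config) (t : ℕ) :
    fmTraj r v (phi C) t
      = ⟨(frTraj r v C t).pos, (frTraj r v C t).vel, phi (frTraj r v C t).cfg⟩ := by
  induction t with
  | zero => rfl
  | succ n ih =>
      have : frTraj r v C (n+1) = frStep (frTraj r v C n) := by
        simp [frTraj, Function.iterate_succ_apply']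
      rw [this]
      have h2 : fmTraj r v (phi C) (n+1) = fmStep (fmTraj r v (phi C) n) := by
        simp [fmTraj, Function.iterate_succ_apply']
      rw [h2, ih, fm_phi_step]

lemma fr_phi_traj (r v : Pt) (C : Config) (t : ℕ) :
    frTraj r v (phi C) t
      = ⟨(fmTraj r v C t).pos, (fmTraj r v C t).vel, phi (fmTraj r v C t).cfg⟩ := by
  induction t with
  | zero => rfl
  | succ n ih =>
      have h2 : fmTraj r v C (n+1) = fmStep (fmTraj r v C n) := by
        simp [fmTraj, Function.iterate_succ_apply']
      have : frTraj r v (phi C) (n+1) = frStep (frTraj r v (phi C) n) := by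
        simp [frTraj, Function.iterate_succ_apply']
      rw [this, h2, ih, fr_phi_step]

/-- For any initial configuration `C` and initial state `(r,v)`, the flipping rotator
system `(H_fr, I, C)` and the flipping mirror system `(H_fm, I, φ(C))` give the particle
the same trajectory; symmetrically, `(H_fm, I, C)` and `(H_fr, I, φ(C))` have the same
trajectory. -/
theorem stmt_10 (C : Config) (r v : Pt) (hC : ValidConfig C) (hI : IsInitial r v) :
    (∀ t : ℕ, (frTraj r v C t).pos = (fmTraj r v (phi C) t).pos) ∧
    (∀ t : ℕ, (fmTraj r v C t).pos = (frTraj r v (phi C) t).pos) := by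
  exact ⟨fun t => by rw [fm_phi_traj], fun t => by rw [fr_phi_traj]⟩
end

section
/- Let (H, I, C) be a flipping rotator system with admissible configuration C, and suppose γ = {r(t) : 0 ≤ t ≤ T} is a local cycle (r(0) = r(T), v(0) = v(T), all intermediate positions distinct). Then the cycle is baseless: for any 0 < s < T, the particle started in the system (H, J, C) with initial state J = (r(s), v(s)) traverses exactly the same set of lattice sites, returning to r(s) after T steps, i.e., its trajectory over [0, T] equals γ as a set of positions. -/
open Real

attribute [local instance] Classical.propDecidable

lemma frTraj_succ' (r v : Pt) (C : Config) (t : ℕ) :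
    frTraj r v C (t+1) = frStep (frTraj r v C t) := by
  simp [frTraj, Function.iterate_succ_apply']

lemma frPos_succ' (r v : Pt) (C : Config) (t : ℕ) :
    frPos r v C (t+1) = frPos r v C t + (frTraj r v C t).vel := by
  simp [frPos, frTraj_succ', frStep]

lemma frVel_succ' (r v : Pt) (C : Config) (t : ℕ) :
    (frTraj r v C (t+1)).vel
      = Rot ((frTraj r v C t).cfg (frPos r v C (t+1))) ((frTraj r v C t).vel) := by
  rw [frPos_succ']; simp [frTraj_succ', frStep, frPos]

lemma frCfg_succ' (r v : Pt) (C : Config) (t : ℕ) (h : Pt) :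
    (frTraj r v C (t+1)).cfg h
      = if h = frPos r v C (t+1) then -((frTraj r v C t).cfg h)
        else (frTraj r v C t).cfg h := by
  rw [frPos_succ']; simp [frTraj_succ', frStep, frPos]; congr

lemma frCfg_not_visited' (r v : Pt) (C : Config) (t : ℕ) (h : Pt)
    (H : ∀ u, 1 ≤ u → u ≤ t → frPos r v C u ≠ h) :
    (frTraj r v C t).cfg h = C h := by
  induction t with
  | zero => rfl
  | succ t ih =>
      rw [frCfg_succ', if_neg (fun he => H (t+1) (by omega) le_rfl he.symm)]
      exact ih (fun u h1 h2 => H u h1 (by omega))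

/-- Local cycles are baseless.  Let `C` be admissible and suppose the trajectory of
`(H, (r,v), C)` up to time `T` is a local cycle (`r(T) = r`, `v(T) = v`, all intermediate
positions distinct).  Then for any `0 < s < T`, the particle started from
`J = (r(s), v(s))` in the system `(H, J, C)` returns to `r(s)` after `T` steps and its
trajectory over `[0, T]` equals the cycle as a set of positions. -/
theorem stmt_19 (C : Config) (r v : Pt) (hC : ValidConfig C) (hA : Admissible C)
    (hI : IsInitial r v) (T : ℕ) (hT : 1 ≤ T)
    (hclose : frPos r v C T = r) (hvel : (frTraj r v C T).vel = v)
    (hdist : ∀ s t, s < t → t < T → frPos r v C s ≠ frPos r v C t) :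
    ∀ s, 0 < s → s < T →
      frPos (frPos r v C s) ((frTraj r v C s).vel) C T = frPos r v C s ∧
      {x | ∃ t ≤ T, frPos (frPos r v C s) ((frTraj r v C s).vel) C t = x} =
        {x | ∃ t ≤ T, frPos r v C t = x} := by
  intro s hs0 hsT
  have hP0 : frPos r v C 0 = r := rfl
  have hV0 : (frTraj r v C 0).vel = v := rfl
  -- pairwise distinctness on [1, T]
  have hne2 : ∀ a b, 1 ≤ a → a < b → b ≤ T → frPos r v C a ≠ frPos r v C b := by
    intro a b h1 hab hbT
    rcases lt_or_eq_of_le hbT with h | h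
    · exact hdist a b hab h
    · subst h
      intro he
      rw [hclose, ← hP0] at he
      exact hdist 0 a h1 (lt_of_lt_of_le hab hbT) he.symm
  have hne : ∀ a b, 1 ≤ a → 1 ≤ b → a ≤ T → b ≤ T → a ≠ b →
      frPos r v C a ≠ frPos r v C b := by
    intro a b h1 h2 haT hbT hab
    rcases lt_or_gt_of_ne hab with h | h
    · exact hne2 a b h1 h hbT
    · exact (hne2 b a h2 h haT).symm
  -- the time reindexing
  set ρ : ℕ → ℕ := fun t => if s + t ≤ T then s + t else s + t - T with hρdef
  have hρ0 : ρ 0 = s := by simp only [ρ]; split <;> omega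
  have hρT : ρ T = s := by simp only [ρ]; split <;> omega
  have hρmem : ∀ u, 1 ≤ u → u ≤ T → 1 ≤ ρ u ∧ ρ u ≤ T := by
    intro u h1 h2; simp only [ρ]; split <;> omega
  have hρle : ∀ u, u ≤ T → ρ u ≤ T := by
    intro u h2; simp only [ρ]; split <;> omega
  have hρinj : ∀ u u', 1 ≤ u → u ≤ T → 1 ≤ u' → u' ≤ T → u ≠ u' → ρ u ≠ ρ u' := by
    intro u u' h1 h2 h3 h4 h5; simp only [ρ]; split <;> split <;> omega
  -- main induction
  have main : ∀ t, t ≤ T →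
      (frTraj (frPos r v C s) ((frTraj r v C s).vel) C t).pos = frPos r v C (ρ t) ∧
      (frTraj (frPos r v C s) ((frTraj r v C s).vel) C t).vel = (frTraj r v C (ρ t)).vel ∧
      ∀ h, (frTraj (frPos r v C s) ((frTraj r v C s).vel) C t).cfg h =
        if ∃ u, 1 ≤ u ∧ u ≤ t ∧ frPos r v C (ρ u) = h then -C h else C h := by
    intro t
    induction t with
    | zero =>
        intro _
        refine ⟨by rw [hρ0]; rfl, by rw [hρ0]; rfl, ?_⟩
        intro h
        rw [if_neg (by rintro ⟨u, h1, h2, -⟩; omega)]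
        rfl
    | succ t ih =>
        intro ht
        obtain ⟨ihp, ihv, ihc⟩ := ih (by omega)
        have hm1 : 1 ≤ ρ (t+1) ∧ ρ (t+1) ≤ T := hρmem (t+1) (by omega) ht
        -- step relations for the reindexed original trajectory
        have key : frPos r v C (ρ t) + (frTraj r v C (ρ t)).vel = frPos r v C (ρ (t+1)) ∧
            (frTraj r v C (ρ t)).vel = (frTraj r v C (ρ (t+1) - 1)).vel := by
          by_cases hw : s + t = T
          · have e1 : ρ t = T := by simp only [ρ]; split <;> omega
            have e2 : ρ (t+1) = 1 := by simp only [ρ]; split <;> omega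
            constructor
            · rw [e1, e2, hclose, hvel, frPos_succ' r v C 0, hP0, hV0]
            · rw [e1, e2, hvel]; rfl
          · have e2 : ρ (t+1) = ρ t + 1 := by simp only [ρ]; split <;> split <;> omega
            constructor
            · rw [e2, frPos_succ']
            · rw [e2]; simp
        -- the site encountered at this step
        set h₀ : Pt := frPos r v C (ρ (t+1)) with hh₀
        -- the restarted configuration at h₀ is still C h₀
        have hcfg₀ : (frTraj (frPos r v C s) ((frTraj r v C s).vel) C t).cfg h₀ = C h₀ := by
          rw [ihc h₀, if_neg]
          rintro ⟨u, h1, h2, he⟩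
          exact hne (ρ u) (ρ (t+1)) (hρmem u h1 (by omega)).1 hm1.1
            (hρmem u h1 (by omega)).2 hm1.2
            (hρinj u (t+1) h1 (by omega) (by omega) ht (by omega)) he
        -- position at t+1
        have ihp' : frPos (frPos r v C s) ((frTraj r v C s).vel) C t = frPos r v C (ρ t) := ihp
        have hpos : (frTraj (frPos r v C s) ((frTraj r v C s).vel) C (t+1)).pos = h₀ := by
          show frPos (frPos r v C s) ((frTraj r v C s).vel) C (t+1) = h₀
          rw [frPos_succ', ihp', ihv]
          exact key.1
        refine ⟨hpos, ?_, ?_⟩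
        · -- velocity at t+1
          have hv1 := frVel_succ' (frPos r v C s) ((frTraj r v C s).vel) C t
          have hpos' : frPos (frPos r v C s) ((frTraj r v C s).vel) C (t+1) = h₀ := hpos
          rw [hpos'] at hv1
          rw [hv1, hcfg₀, ihv, key.2]
          -- compare with the original step at time ρ(t+1)-1
          have e3 : ρ (t+1) - 1 + 1 = ρ (t+1) := by omega
          have hv2 := frVel_succ' r v C (ρ (t+1) - 1)
          rw [e3] at hv2
          have hcfg₁ : (frTraj r v C (ρ (t+1) - 1)).cfg h₀ = C h₀ := by
            apply frCfg_not_visited'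
            intro u h1 h2
            exact hne u (ρ (t+1)) h1 hm1.1 (by omega) hm1.2 (by omega)
          rw [hcfg₁] at hv2
          exact hv2.symm
        · -- configuration at t+1
          intro h
          rw [frCfg_succ']
          have hpos' : frPos (frPos r v C s) ((frTraj r v C s).vel) C (t+1) = h₀ := hpos
          rw [hpos']
          by_cases hcase : h = h₀
          · subst hcase
            rw [if_pos rfl, hcfg₀, if_pos ⟨t+1, by omega, le_rfl, rfl⟩]
          · rw [if_neg hcase, ihc h]
            by_cases hex : ∃ u, 1 ≤ u ∧ u ≤ t ∧ frPos r v C (ρ u) = h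
            · obtain ⟨u, h1, h2, he⟩ := hex
              rw [if_pos ⟨u, h1, h2, he⟩, if_pos ⟨u, h1, by omega, he⟩]
            · rw [if_neg hex, if_neg]
              rintro ⟨u, h1, h2, he⟩
              rcases Nat.lt_or_ge u (t+1) with h' | h'
              · exact hex ⟨u, h1, by omega, he⟩
              · have hu : u = t + 1 := by omega
                subst hu
                exact hcase he.symm
  constructor
  · have := (main T le_rfl).1
    rw [hρT] at this
    exact this
  · ext x
    simp only [Set.mem_setOf_eq]
    constructor
    · rintro ⟨t, ht, he⟩
      have hp := (main t ht).1
      exact ⟨ρ t, hρle t ht, hp.symm.trans he⟩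
    · rintro ⟨t, ht, he⟩
      rcases Nat.eq_zero_or_pos t with h0 | h0
      · -- use t' = T - s, since ρ (T - s) = T and P T = P 0
        refine ⟨T - s, by omega, ?_⟩
        have hp := (main (T - s) (by omega)).1
        have e : ρ (T - s) = T := by simp only [ρ]; split <;> omega
        rw [e] at hp
        show (frTraj (frPos r v C s) ((frTraj r v C s).vel) C (T - s)).pos = x
        rw [hp, hclose, ← he, h0, hP0]
      · rcases le_or_gt s t with hst | hst
        · refine ⟨t - s, by omega, ?_⟩
          have hp := (main (t - s) (by omega)).1
          have e : ρ (t - s) = t := by simp only [ρ]; split <;> omega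
          rw [e] at hp
          exact hp.trans he
        · refine ⟨T - s + t, by omega, ?_⟩
          have hp := (main (T - s + t) (by omega)).1
          have e : ρ (T - s + t) = t := by simp only [ρ]; split <;> omega
          rw [e] at hp
          exact hp.trans he
end
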